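/- Let E be an elementary abelian p-group of rank m ≥ 3 (p prime). Then ∑_{H ≤ E} |H| > p^{m+1}. -/

import Mathlib

lemma aux_ker_eq_smul {K V : Type*} [Field K] [AddCommGroup V] [Module K V]
    (φ ψ : V →ₗ[K] K) (hφ : φ ≠ 0) (h : LinearMap.ker φ = LinearMap.ker ψ) :
    ∃ c : K, ψ = c • φ := by
  obtain ⟨x, hx⟩ : ∃ x, φ x ≠ 0 := by
    by_contra h'; push_neg at h'; exact hφ (LinearMap.ext fun v => h' v)
  refine ⟨ψ x / φ x, LinearMap.ext fun y => ?_⟩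
  have hy : y - (φ y / φ x) • x ∈ LinearMap.ker φ := by
    simp only [LinearMap.mem_ker, map_sub, map_smul, smul_eq_mul, sub_eq_zero]
    field_simp
  rw [h] at hy
  simp only [LinearMap.mem_ker, map_sub, map_smul, sub_eq_zero, smul_eq_mul] at hy
  simp only [LinearMap.smul_apply, smul_eq_mul, hy]
  field_simp

lemma aux_count (p m : ℕ) (hp : p.Prime) [Fact p.Prime] (hm : 3 ≤ m)
    (V : Type*) [AddCommGroup V] [Module (ZMod p) V] [Finite V]
    (hcard : Nat.card V = p ^ m) :
    p ^ (m + 1) < ∑ᶠ W : Submodule (ZMod p) V, Nat.card W := by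
  classical
  haveI : NeZero p := ⟨hp.ne_zero⟩
  haveI : Module.Finite (ZMod p) V := Module.Finite.of_finite
  letI : Fintype V := Fintype.ofFinite V
  have hcardA : Fintype.card V = p ^ m := by
    rw [← Nat.card_eq_fintype_card]; exact hcard
  have hfr : Module.finrank (ZMod p) V = m := by
    have := Module.card_eq_pow_finrank (K := ZMod p) (V := V)
    rw [ZMod.card, hcardA] at this
    exact (Nat.pow_right_injective hp.two_le this.symm)
  haveI : Finite (Module.Dual (ZMod p) V) :=
    Finite.of_injective (fun f : Module.Dual (ZMod p) V => (f : V →ₗ[ZMod p] ZMod p).toFun)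
      (fun f g h => LinearMap.ext fun x => congrFun h x)
  letI : Fintype (Module.Dual (ZMod p) V) := Fintype.ofFinite _
  have hcardD : Fintype.card (Module.Dual (ZMod p) V) = p ^ m := by
    have := Module.card_eq_pow_finrank (K := ZMod p) (V := Module.Dual (ZMod p) V)
    rw [ZMod.card, Subspace.dual_finrank_eq, hfr] at this
    exact this
  set F : Module.Dual (ZMod p) V → Submodule (ZMod p) V := fun φ => LinearMap.ker φ with hF
  have hker : ∀ φ : Module.Dual (ZMod p) V, φ ≠ 0 → Nat.card (LinearMap.ker φ) = p ^ (m - 1) := by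
    intro φ hφ
    obtain ⟨x, hx⟩ : ∃ x, φ x ≠ 0 := by
      by_contra h'; push_neg at h'; exact hφ (LinearMap.ext fun v => h' v)
    have hsurj : Function.Surjective φ := fun c => ⟨(c / φ x) • x, by
      simp [div_mul_cancel₀, hx]⟩
    have h1 : Module.finrank (ZMod p) (LinearMap.range φ) = 1 := by
      rw [LinearMap.range_eq_top.mpr hsurj]
      simp
    have h2 := LinearMap.finrank_range_add_finrank_ker φ
    rw [h1, hfr] at h2
    have h3 : Module.finrank (ZMod p) (LinearMap.ker φ) = m - 1 := by omega
    letI : Fintype (LinearMap.ker φ) := Fintype.ofFinite _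
    have := Module.card_eq_pow_finrank (K := ZMod p) (V := LinearMap.ker φ)
    rw [ZMod.card, h3] at this
    rw [Nat.card_eq_fintype_card, this]
  set S : Finset (Module.Dual (ZMod p) V) := Finset.univ.filter (fun φ => φ ≠ 0) with hS
  haveI : Finite (Submodule (ZMod p) V) :=
    Finite.of_injective (SetLike.coe : Submodule (ZMod p) V → Set V) SetLike.coe_injective
  letI : Fintype (Submodule (ZMod p) V) := Fintype.ofFinite _
  set T : Finset (Submodule (ZMod p) V) := S.image F with hT
  have hScard : S.card = p ^ m - 1 := by
    rw [hS, Finset.filter_ne', Finset.card_erase_of_mem (Finset.mem_univ _),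
      Finset.card_univ, hcardD]
  have hfiber : S.card ≤ (p - 1) * T.card := by
    apply Finset.card_le_mul_card_image
    intro b hb
    obtain ⟨φ, hφS, hφb⟩ := Finset.mem_image.mp hb
    have hφ : φ ≠ 0 := by simpa [hS] using hφS
    have hsub : (S.filter (fun a => F a = b)) ⊆
        (Finset.univ.filter (fun c : ZMod p => c ≠ 0)).image (fun c => c • φ) := by
      intro ψ hψ
      simp only [Finset.mem_filter] at hψ
      obtain ⟨hψS, hψb⟩ := hψ
      have hψ0 : ψ ≠ 0 := by simpa [hS] using hψS
      have hkk : LinearMap.ker φ = LinearMap.ker ψ := by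
        have : F φ = F ψ := by rw [hφb, hψb]
        simpa [hF] using this
      obtain ⟨c, hc⟩ := aux_ker_eq_smul φ ψ hφ hkk
      refine Finset.mem_image.mpr ⟨c, ?_, hc.symm⟩
      simp only [Finset.mem_filter, Finset.mem_univ, true_and]
      rintro rfl
      simp at hc
      exact hψ0 hc
    calc (S.filter (fun a => F a = b)).card
        ≤ _ := Finset.card_le_card hsub
      _ ≤ (Finset.univ.filter (fun c : ZMod p => c ≠ 0)).card := Finset.card_image_le
      _ = p - 1 := by
          rw [Finset.filter_ne', Finset.card_erase_of_mem (Finset.mem_univ _),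
            Finset.card_univ, ZMod.card]
  have hTcard : p ^ (m - 1) ≤ T.card := by
    rw [hScard] at hfiber
    have hp1 : 1 ≤ p ^ (m - 1) := Nat.one_le_pow _ _ hp.pos
    have heq : (p - 1) * p ^ (m - 1) = p ^ m - p ^ (m - 1) := by
      have hm1 : m - 1 + 1 = m := by omega
      calc (p - 1) * p ^ (m-1) = p * p^(m-1) - 1 * p^(m-1) := by
            rw [Nat.sub_mul]
        _ = p ^ m - p ^ (m-1) := by rw [one_mul, ← pow_succ', hm1]
    have h1 : (p - 1) * p ^ (m - 1) ≤ (p - 1) * T.card := by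
      calc (p - 1) * p ^ (m - 1) = p ^ m - p ^ (m - 1) := heq
        _ ≤ p ^ m - 1 := Nat.sub_le_sub_left hp1 _
        _ ≤ (p - 1) * T.card := hfiber
    exact Nat.le_of_mul_le_mul_left h1 (by have := hp.two_le; omega)
  have hTmem : ∀ W ∈ T, Nat.card W = p ^ (m - 1) := by
    intro W hW
    obtain ⟨φ, hφS, rfl⟩ := Finset.mem_image.mp hW
    have hφ : φ ≠ 0 := by simpa [hS] using hφS
    exact hker φ hφ
  have htop : (⊤ : Submodule (ZMod p) V) ∉ T := by
    intro h
    have h1 := hTmem ⊤ h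
    have h2 : Nat.card (⊤ : Submodule (ZMod p) V) = p ^ m := by
      rw [← hcard]
      exact Nat.card_congr Submodule.topEquiv.toEquiv
    rw [h2] at h1
    have : m = m - 1 := Nat.pow_right_injective hp.two_le h1
    omega
  rw [finsum_eq_sum_of_fintype]
  have hge : ∑ W ∈ insert ⊤ T, Nat.card W ≤ ∑ W : Submodule (ZMod p) V, Nat.card W :=
    Finset.sum_le_sum_of_subset (Finset.subset_univ _)
  have hins : ∑ W ∈ insert ⊤ T, Nat.card W = p ^ m + T.card * p ^ (m - 1) := by
    rw [Finset.sum_insert htop]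
    congr 1
    · rw [← hcard]; exact Nat.card_congr Submodule.topEquiv.toEquiv
    · rw [Finset.sum_congr rfl hTmem, Finset.sum_const, smul_eq_mul]
  have hbig : p ^ (m + 1) < p ^ m + T.card * p ^ (m - 1) := by
    have h1 : p ^ (m - 1) * p ^ (m - 1) ≤ T.card * p ^ (m - 1) :=
      Nat.mul_le_mul_right _ hTcard
    have h2 : p ^ (m + 1) ≤ p ^ (m - 1) * p ^ (m - 1) := by
      rw [← pow_add]
      exact Nat.pow_le_pow_right hp.pos (by omega)
    have h3 : 0 < p ^ m := pow_pos hp.pos _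
    omega
  omega

lemma aux_sum_le (R E : Type*) [Ring R] [CommGroup E] [Finite E]
    [Module R (Additive E)] :
    ∑ᶠ W : Submodule R (Additive E), Nat.card W ≤ ∑ᶠ H : Subgroup E, Nat.card H := by
  classical
  haveI : Finite (Submodule R (Additive E)) :=
    Finite.of_injective (SetLike.coe : Submodule R (Additive E) → Set (Additive E))
      SetLike.coe_injective
  haveI : Finite (Subgroup E) :=
    Finite.of_injective (SetLike.coe : Subgroup E → Set E) SetLike.coe_injective
  letI : Fintype (Submodule R (Additive E)) := Fintype.ofFinite _
  letI : Fintype (Subgroup E) := Fintype.ofFinite _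
  set G : Submodule R (Additive E) → Subgroup E := fun W =>
    Subgroup.toAddSubgroup.symm W.toAddSubgroup with hG
  have hGinj : Function.Injective G := fun W₁ W₂ h =>
    Submodule.toAddSubgroup_injective (Subgroup.toAddSubgroup.symm.injective h)
  have hGcard : ∀ W, Nat.card (G W) = Nat.card W := fun W =>
    Nat.card_congr ⟨fun x => ⟨Additive.ofMul x.1, x.2⟩, fun x => ⟨Additive.toMul x.1, x.2⟩,
      fun _ => rfl, fun _ => rfl⟩
  rw [finsum_eq_sum_of_fintype, finsum_eq_sum_of_fintype]
  calc ∑ W : Submodule R (Additive E), Nat.card W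
      = ∑ W : Submodule R (Additive E), Nat.card (G W) :=
        Finset.sum_congr rfl (fun W _ => (hGcard W).symm)
    _ = ∑ H ∈ Finset.univ.image G, Nat.card H :=
        (Finset.sum_image (f := fun H : Subgroup E => Nat.card H) (fun a _ b _ h => hGinj h)).symm
    _ ≤ ∑ H : Subgroup E, Nat.card H :=
        Finset.sum_le_sum_of_subset (Finset.subset_univ _)

theorem elementaryAbelian_rank_ge_three_subgroup_sum (p m : ℕ) (hp : p.Prime) (hm : 3 ≤ m)
    (E : Type*) [CommGroup E] [Finite E] (hcard : Nat.card E = p ^ m)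
    (hel : ∀ x : E, x ^ p = 1) :
    p ^ (m + 1) < ∑ᶠ H : Subgroup E, Nat.card H := by
  classical
  haveI := Fact.mk hp
  haveI : NeZero p := ⟨hp.ne_zero⟩
  letI : Module (ZMod p) (Additive E) := AddCommGroup.zmodModule (n := p)
    (fun x => Additive.toMul.injective (by rw [toMul_nsmul]; simpa using hel x.toMul))
  exact lt_of_lt_of_le (aux_count p m hp hm (Additive E) hcard) (aux_sum_le (ZMod p) E)
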